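/- Let S and A be finite nonempty types. Let d_i and d_O be probability mass functions on S × A with state marginals d_i^S(s) = Σ_a d_i(s,a) and d_O^S(s) = Σ_a d_O(s,a), and let d_E be a probability mass function on S. Assume d_i is absolutely continuous with respect to d_O, and that d_i^S(s) > 0 implies d_E(s) > 0. Define the optimal state discriminator c*(s) = d_E(s)/(d_E(s)+d_O^S(s)) for states with d_E(s)+d_O^S(s) > 0, and define the importance ratio η(s,a) = d_i(s,a)/d_O(s,a) wherever d_O(s,a) > 0. Then Σ_{s : d_i^S(s)>0} d_i^S(s) · log(d_E(s)/d_O^S(s)) = Σ_{(s,a) : d_O(s,a)>0} d_O(s,a) · η(s,a) · log(c*(s)/(1 − c*(s))). -/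

import Mathlib

/-- Claim 3 of the paper: the expected log density ratio under `d_i` equals the
`d_O`-weighted expectation of the importance ratio times the log-odds of the
optimal state discriminator. -/
theorem discriminator_log_ratio_estimator
    {S A : Type*} [Fintype S] [Fintype A] [Nonempty S] [Nonempty A]
    (d_i d_O : S × A → ℝ) (d_E : S → ℝ)
    (hdi : ∀ sa, 0 ≤ d_i sa) (hdisum : ∑ sa, d_i sa = 1)
    (hdO : ∀ sa, 0 ≤ d_O sa) (hdOsum : ∑ sa, d_O sa = 1)
    (hdE : ∀ s, 0 ≤ d_E s) (hdEsum : ∑ s, d_E s = 1)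
    (diS dOS : S → ℝ)
    (hdiS : ∀ s, diS s = ∑ a, d_i (s, a))
    (hdOS : ∀ s, dOS s = ∑ a, d_O (s, a))
    (habs : ∀ sa, d_O sa = 0 → d_i sa = 0)
    (habsE : ∀ s, 0 < diS s → 0 < d_E s)
    (cstar : S → ℝ)
    (hc : ∀ s, 0 < d_E s + dOS s → cstar s = d_E s / (d_E s + dOS s))
    (η : S × A → ℝ)
    (hη : ∀ sa, 0 < d_O sa → η sa = d_i sa / d_O sa) :
    (∑ s, if 0 < diS s then diS s * Real.log (d_E s / dOS s) else 0)
      = ∑ sa, if 0 < d_O sa then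
          d_O sa * η sa * Real.log (cstar sa.1 / (1 - cstar sa.1)) else 0 := by
  have hdiS0 : ∀ s, 0 ≤ diS s := fun s => by
    rw [hdiS]; exact Finset.sum_nonneg fun a _ => hdi _
  have lhs : (∑ s, if 0 < diS s then diS s * Real.log (d_E s / dOS s) else 0)
      = ∑ s, diS s * Real.log (d_E s / dOS s) := by
    refine Finset.sum_congr rfl fun s _ => ?_
    rcases lt_or_eq_of_le (hdiS0 s) with h | h
    · simp [h]
    · simp [← h]
  have rhs : (∑ sa : S × A, if 0 < d_O sa then
          d_O sa * η sa * Real.log (cstar sa.1 / (1 - cstar sa.1)) else 0)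
      = ∑ sa : S × A, d_i sa * Real.log (d_E sa.1 / dOS sa.1) := by
    refine Finset.sum_congr rfl fun sa _ => ?_
    rcases lt_or_eq_of_le (hdO sa) with h | h
    · have hOS : 0 < dOS sa.1 := by
        rw [hdOS]
        exact Finset.sum_pos' (fun a _ => hdO _) ⟨sa.2, Finset.mem_univ _, h⟩
      have ht : 0 < d_E sa.1 + dOS sa.1 := by linarith [hdE sa.1]
      have hcs : cstar sa.1 / (1 - cstar sa.1) = d_E sa.1 / dOS sa.1 := by
        rw [hc _ ht]
        have h1 : 1 - d_E sa.1 / (d_E sa.1 + dOS sa.1)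
            = dOS sa.1 / (d_E sa.1 + dOS sa.1) := by
          field_simp
          ring
        rw [h1, div_div_div_eq, mul_comm (d_E sa.1), mul_div_mul_left _ _ ht.ne']
      rw [if_pos h, hη sa h, hcs]
      field_simp
    · rw [if_neg (by simp [← h]), habs sa h.symm, zero_mul]
  rw [lhs, rhs, Fintype.sum_prod_type]
  refine Finset.sum_congr rfl fun s _ => ?_
  rw [hdiS, Finset.sum_mul]
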